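/- Let p be an odd prime and let k, ℓ, r, t, m be natural numbers with 1 < ℓ < k, ℓ dividing k with k/ℓ even, k < ℓ², 0 < r < k, t dividing p − 1, m dividing (p^k + 1)(p − 1), and m > 1. Then m·(p^ℓ·t + 1) ≠ t·(p^(k−r) + 1). -/

import Mathlib

lemma aux_gcd_two (p a b G : ℕ) (ha : G ∣ p ^ a + 1) (hb : G ∣ p ^ b + 1)
    (hodd : ¬ 2 ∣ (a / Nat.gcd a b)) (heven : 2 ∣ (b / Nat.gcd a b)) :
    G ∣ 2 := by
  set g := Nat.gcd a b with hg
  have hga : g ∣ a := Nat.gcd_dvd_left a b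
  have hgb : g ∣ b := Nat.gcd_dvd_right a b
  have ha' : a = g * (a / g) := (Nat.mul_div_cancel' hga).symm
  have hb' : b = g * (b / g) := (Nat.mul_div_cancel' hgb).symm
  set A := a / g
  set B := b / g
  have h1 : ((p : ZMod G) ^ g) ^ A = -1 := by
    have : ((p ^ a + 1 : ℕ) : ZMod G) = 0 := (ZMod.natCast_eq_zero_iff _ _).2 ha
    push_cast at this
    rw [← pow_mul, ← ha']
    linear_combination this
  have h2 : ((p : ZMod G) ^ g) ^ B = -1 := by
    have : ((p ^ b + 1 : ℕ) : ZMod G) = 0 := (ZMod.natCast_eq_zero_iff _ _).2 hb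
    push_cast at this
    rw [← pow_mul, ← hb']
    linear_combination this
  have e1 : ((p : ZMod G) ^ g) ^ (A * B) = (-1) ^ B := by rw [pow_mul, h1]
  have e2 : ((p : ZMod G) ^ g) ^ (A * B) = (-1) ^ A := by rw [Nat.mul_comm, pow_mul, h2]
  rw [e1] at e2
  rw [Even.neg_one_pow ⟨B/2, by omega⟩, Odd.neg_one_pow ⟨A/2, by omega⟩] at e2
  have : ((2 : ℕ) : ZMod G) = 0 := by push_cast; linear_combination e2
  exact (ZMod.natCast_eq_zero_iff _ _).1 this

theorem stmt_17 (p k ℓ r t m : ℕ) (hp : p.Prime) (hodd : Odd p)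
    (hℓ : 1 < ℓ) (hℓk : ℓ < k) (hdvd : ℓ ∣ k) (heven : Even (k / ℓ))
    (hkℓ : k < ℓ ^ 2) (hr : 0 < r) (hrk : r < k)
    (ht : t ∣ p - 1) (hm : m ∣ (p ^ k + 1) * (p - 1)) (hm1 : 1 < m) :
    m * (p ^ ℓ * t + 1) ≠ t * (p ^ (k - r) + 1) := by
  intro heq
  have hp3 : 3 ≤ p := by
    have h2 := hp.two_le
    have hne : p ≠ 2 := by rintro rfl; exact (by decide : ¬ Odd 2) hodd
    omega
  have hp1 : 1 < p := hp.one_lt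
  have ht0 : 0 < t := Nat.pos_of_dvd_of_pos ht (by omega)
  have htp : t ≤ p - 1 := Nat.le_of_dvd (by omega) ht
  set d := k - r with hd
  have hd0 : 0 < d := by omega
  have hdk : d < k := by omega
  set N := p ^ ℓ * t + 1 with hN
  have hcop : Nat.Coprime N t := by
    have h1 : Nat.Coprime (1 + t * p ^ ℓ) t :=
      (Nat.coprime_add_mul_left_left 1 t (p ^ ℓ)).2 (Nat.coprime_one_left t)
    have h2 : 1 + t * p ^ ℓ = N := by rw [hN]; ring
    rwa [h2] at h1
  have hNdvd : N ∣ p ^ d + 1 :=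
    hcop.dvd_of_dvd_mul_left (Dvd.intro_left m heq)
  set q := d / ℓ with hq
  set ρ := d % ℓ with hρdef
  have hdq : ℓ * q + ρ = d := Nat.div_add_mod d ℓ
  have hρℓ : ρ < ℓ := Nat.mod_lt _ (by omega)
  have hqℓ : q < ℓ := by
    have h1 : ℓ * q ≤ d := by omega
    by_contra hc
    push_neg at hc
    have h2 : ℓ * ℓ ≤ ℓ * q := Nat.mul_le_mul_left _ hc
    have h3 : ℓ ^ 2 = ℓ * ℓ := sq ℓ
    omega
  -- size bounds
  have hpow1 : p ^ ρ ≤ p ^ (ℓ - 1) := Nat.pow_le_pow_right (by omega) (by omega)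
  have hie : p ^ (ℓ - 1) * p = p ^ ℓ := by
    rw [← pow_succ]; congr 1; omega
  have htq : t ^ q ≤ p ^ (ℓ - 1) :=
    le_trans (Nat.pow_le_pow_left (by omega : t ≤ p) q)
      (Nat.pow_le_pow_right (by omega) (by omega))
  have hpos : 0 < p ^ (ℓ - 1) := Nat.pow_pos (by omega)
  have hNbig : p ^ (ℓ - 1) + p ^ (ℓ - 1) < N := by
    have h1 : 3 * p ^ (ℓ - 1) ≤ p * p ^ (ℓ - 1) := Nat.mul_le_mul_right _ hp3
    have h2 : p ^ ℓ ≤ p ^ ℓ * t := Nat.le_mul_of_pos_right _ ht0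
    have h3 : p * p ^ (ℓ - 1) = p ^ ℓ := by rw [Nat.mul_comm]; exact hie
    omega
  -- congruences mod N
  have hx : (p : ZMod N) ^ ℓ * (t : ZMod N) = -1 := by
    have h0 : ((p ^ ℓ * t + 1 : ℕ) : ZMod N) = 0 := by
      rw [← hN]; exact ZMod.natCast_self N
    push_cast at h0
    linear_combination h0
  have hxd : (p : ZMod N) ^ d = -1 := by
    have h0 : ((p ^ d + 1 : ℕ) : ZMod N) = 0 := (ZMod.natCast_eq_zero_iff _ _).2 hNdvd
    push_cast at h0
    linear_combination h0
  have hq1 : (p : ZMod N) ^ (ℓ * q) * (t : ZMod N) ^ q = (-1) ^ q := by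
    calc (p : ZMod N) ^ (ℓ * q) * (t : ZMod N) ^ q
        = ((p : ZMod N) ^ ℓ * (t : ZMod N)) ^ q := by rw [mul_pow, pow_mul]
      _ = (-1) ^ q := by rw [hx]
  have key : (-1 : ZMod N) ^ q * (p : ZMod N) ^ ρ = -(t : ZMod N) ^ q := by
    have h0 : (p : ZMod N) ^ (ℓ * q) * (t : ZMod N) ^ q * (p : ZMod N) ^ ρ
        = -(t : ZMod N) ^ q := by
      have hsplit : (p : ZMod N) ^ d = (p : ZMod N) ^ (ℓ * q) * (p : ZMod N) ^ ρ := by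
        rw [← pow_add, hdq]
      rw [hsplit] at hxd
      linear_combination (t : ZMod N) ^ q * hxd
    rw [hq1] at h0
    exact h0
  rcases Nat.even_or_odd q with hqe | hqo
  · -- q even: contradiction by size
    have h0 : ((p ^ ρ + t ^ q : ℕ) : ZMod N) = 0 := by
      rw [hqe.neg_one_pow] at key
      push_cast
      linear_combination key
    have hdvd2 : N ∣ p ^ ρ + t ^ q := (ZMod.natCast_eq_zero_iff _ _).1 h0
    have hle : N ≤ p ^ ρ + t ^ q := Nat.le_of_dvd (by positivity) hdvd2
    omega
  · -- q odd
    have hq0 : q ≠ 0 := by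
      intro h
      rw [h] at hqo
      exact (by decide : ¬ Odd 0) hqo
    have hval : (p ^ ρ : ℕ) = t ^ q := by
      have h0 : ((p ^ ρ : ℕ) : ZMod N) = ((t ^ q : ℕ) : ZMod N) := by
        rw [hqo.neg_one_pow] at key
        push_cast
        linear_combination -key
      have h1 := congrArg ZMod.val h0
      rwa [ZMod.val_cast_of_lt (by omega), ZMod.val_cast_of_lt (by omega)] at h1
    have hcp : Nat.Coprime t p := by
      have hc1 : Nat.Coprime (1 + (p - 1) * 1) (p - 1) :=
        (Nat.coprime_add_mul_left_left 1 (p - 1) 1).2 (Nat.coprime_one_left _)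
      have hc2 : 1 + (p - 1) * 1 = p := by omega
      rw [hc2] at hc1
      exact (Nat.Coprime.coprime_dvd_left ht hc1.symm).symm.symm
    have ht1 : t = 1 := by
      have hdt : t ∣ p ^ ρ := by
        rw [hval]
        exact dvd_pow_self t hq0
      exact (hcp.pow_right ρ).eq_one_of_dvd hdt
    have hρ0 : ρ = 0 := by
      by_contra hc
      have := Nat.one_lt_pow hc hp1
      rw [hval, ht1, one_pow] at this
      omega
    have heq2 : m * (p ^ ℓ + 1) = p ^ d + 1 := by
      rw [hN, ht1] at heq
      simpa using heq
    have hq3 : 3 ≤ q := by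
      by_contra hc
      push_neg at hc
      have hq1' : q = 1 := by
        rcases hqo with ⟨j, hj⟩; omega
      rw [hq1', Nat.mul_one] at hdq
      have hdℓ : d = ℓ := by omega
      rw [hdℓ] at heq2
      have hpos2 : 0 < p ^ ℓ + 1 := by positivity
      have hm1' : m = 1 :=
        Nat.eq_of_mul_eq_mul_right hpos2 (heq2.trans (one_mul _).symm)
      omega
    -- m divides p^d+1
    have hmd : m ∣ p ^ d + 1 := ⟨p ^ ℓ + 1, heq2.symm⟩
    set G := Nat.gcd m (p ^ k + 1) with hG
    have hGd : G ∣ p ^ d + 1 := dvd_trans (Nat.gcd_dvd_left _ _) hmd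
    have hGk : G ∣ p ^ k + 1 := Nat.gcd_dvd_right _ _
    -- d = ℓ * q, k = ℓ * c with c even
    obtain ⟨c, hc⟩ := hdvd
    have hceven : Even c := by
      have : k / ℓ = c := by rw [hc]; exact Nat.mul_div_cancel_left c (by omega)
      rwa [this] at heven
    have hgcd : Nat.gcd d k = ℓ * Nat.gcd q c := by
      rw [← hdq, hρ0, Nat.add_zero, hc, Nat.gcd_mul_left]
    have hdg : d / Nat.gcd d k = q / Nat.gcd q c := by
      rw [hgcd, ← hdq, hρ0, Nat.add_zero, Nat.mul_div_mul_left _ _ (by omega : 0 < ℓ)]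
    have hkg : k / Nat.gcd d k = c / Nat.gcd q c := by
      rw [hgcd, hc, Nat.mul_div_mul_left _ _ (by omega : 0 < ℓ)]
    have hqc : Nat.gcd q c ∣ q := Nat.gcd_dvd_left q c
    have hqc' : Nat.gcd q c ∣ c := Nat.gcd_dvd_right q c
    have hqcpos : 0 < Nat.gcd q c := Nat.gcd_pos_of_pos_left c (by omega)
    have hA : ¬ 2 ∣ (d / Nat.gcd d k) := by
      rw [hdg]
      intro h2
      have : 2 ∣ q := dvd_trans h2 (Nat.div_dvd_of_dvd hqc)
      exact (Nat.not_even_iff_odd.2 hqo) (even_iff_two_dvd.2 this)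
    have hB : 2 ∣ (k / Nat.gcd d k) := by
      rw [hkg]
      have hgodd : ¬ 2 ∣ Nat.gcd q c := by
        intro h2
        exact (Nat.not_even_iff_odd.2 hqo) (even_iff_two_dvd.2 (dvd_trans h2 hqc))
      have h2c : 2 ∣ c := hceven.two_dvd
      have := Nat.mul_div_cancel' hqc'
      rcases (Nat.Prime.dvd_mul Nat.prime_two).1 (by rw [this]; exact h2c) with h | h
      · exact absurd h hgodd
      · exact h
    have hG2 : G ∣ 2 := aux_gcd_two p d k G hGd hGk hA hB
    -- m ≤ 2 * (p-1)
    have hmdd : m ∣ Nat.gcd m (p ^ k + 1) * Nat.gcd m (p - 1) := by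
      have h1 : Nat.gcd m ((p ^ k + 1) * (p - 1)) = m := Nat.gcd_eq_left hm
      calc m = Nat.gcd m ((p ^ k + 1) * (p - 1)) := h1.symm
        _ ∣ Nat.gcd m (p ^ k + 1) * Nat.gcd m (p - 1) := gcd_mul_dvd_mul_gcd m _ _
    have hGle : G ≤ 2 := Nat.le_of_dvd (by omega) hG2
    have hg2le : Nat.gcd m (p - 1) ≤ p - 1 := Nat.le_of_dvd (by omega) (Nat.gcd_dvd_right _ _)
    have hmle : m ≤ 2 * (p - 1) := by
      have h1 : m ≤ Nat.gcd m (p ^ k + 1) * Nat.gcd m (p - 1) := by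
        apply Nat.le_of_dvd _ hmdd
        have hpos1 : 0 < Nat.gcd m (p ^ k + 1) := Nat.gcd_pos_of_pos_left _ (by omega)
        have hpos2 : 0 < Nat.gcd m (p - 1) := Nat.gcd_pos_of_pos_left _ (by omega)
        positivity
      calc m ≤ Nat.gcd m (p ^ k + 1) * Nat.gcd m (p - 1) := h1
        _ ≤ 2 * (p - 1) := Nat.mul_le_mul hGle hg2le
    -- final size contradiction
    set X := p ^ ℓ with hX
    have hX9 : 9 ≤ X := by
      calc (9 : ℕ) = 3 ^ 2 := by norm_num
        _ ≤ p ^ 2 := Nat.pow_le_pow_left hp3 2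
        _ ≤ p ^ ℓ := Nat.pow_le_pow_right (by omega) (by omega)
    have h2p : 2 * (p - 1) ≤ X := by
      calc 2 * (p - 1) ≤ 2 * p := by omega
        _ ≤ p * p := Nat.mul_le_mul_right _ (by omega)
        _ = p ^ 2 := (sq p).symm
        _ ≤ X := Nat.pow_le_pow_right (by omega) (by omega)
    have h3ld : 3 * ℓ ≤ d := by
      have h1 : 3 * ℓ ≤ ℓ * q := by
        calc 3 * ℓ = ℓ * 3 := by ring
          _ ≤ ℓ * q := Nat.mul_le_mul_left _ hq3
      omega
    have hX3 : X * X * X ≤ p ^ d := by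
      calc X * X * X = p ^ (3 * ℓ) := by rw [hX, ← pow_add, ← pow_add]; congr 1; ring
        _ ≤ p ^ d := Nat.pow_le_pow_right (by omega) h3ld
    have hfin : m * (X + 1) ≤ X * (X + 1) :=
      Nat.mul_le_mul (le_trans hmle h2p) (le_refl _)
    rw [heq2] at hfin
    have e1 : X * (X + 1) = X * X + X := by ring
    rw [e1] at hfin
    have hXX : X ≤ X * X := Nat.le_mul_of_pos_left X (by omega)
    have c2 : 9 * (X * X) ≤ X * (X * X) := Nat.mul_le_mul_right _ hX9
    have e2 : X * (X * X) = X * X * X := by ring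
    rw [e2] at c2
    linarith
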